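/- Let χ_1 be a Dirichlet character mod M, χ_2 a primitive Dirichlet character mod N with gcd(M,N)=1, H = MN, and k−j ≥ 1 an integer with χ_1χ_2(−1) = (−1)^{k−j}. Define the Dirichlet series D(s) = Σ_{a=1}^{H} Σ_{b=1}^{H} χ_1(a) χ_2(b) [ζ(a/H, s−(k−j)+1) ζ*(b/H, s) + (−1)^{k−j} ζ(−a/H, s−(k−j)+1) ζ*(−b/H, s)], where ζ*(β, s) = Σ_{n≥1} e^{2πiβn} n^{-s}. Then (1/(2G(χ_2))) D(s) = N^{s−1} H^{2−(k−j)} L_M(χ_1, s − (k−j) + 1) · L(χ_2^{-1}, s) (as an identity of Dirichlet series for Re(s) large). -/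

import Mathlib

open Complex

/-- `hzeta x s = ζ(x, s) = ∑_{t > 0, t ≡ x mod ℤ} t^{-s}`: the Hurwitz-type zeta
function attached to `x ∈ ℝ/ℤ`; the smallest positive real congruent to `x` mod `ℤ`
is `1 - Int.fract (-x)`. -/
noncomputable def hzeta (x : ℝ) (s : ℂ) : ℂ :=
  ∑' n : ℕ, (((n : ℝ) + (1 - Int.fract (-x)) : ℝ) : ℂ) ^ (-s)

/-- `hzetaStar x s = ζ*(x, s) = ∑_{n ≥ 1} e^{2πixn} n^{-s}`. -/
noncomputable def hzetaStar (x : ℝ) (s : ℂ) : ℂ :=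
  ∑' n : ℕ, Complex.exp (2 * Real.pi * Complex.I * (x : ℂ) * ((n : ℂ) + 1)) / ((n : ℂ) + 1) ^ s

lemma fract_aux {x : ℝ} (h0 : 0 < x) (h1 : x ≤ 1) : 1 - Int.fract (-x) = x := by
  rcases eq_or_lt_of_le h1 with h | h
  · rw [h]; norm_num
  · have : ⌊-x⌋ = -1 := by
      rw [Int.floor_eq_iff]
      constructor <;> push_cast <;> linarith
    rw [Int.fract, this]
    push_cast; ring

lemma hzeta_int_shift (x : ℝ) (k : ℤ) (σ : ℂ) : hzeta (x + k) σ = hzeta x σ := by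
  unfold hzeta
  rw [show -(x + (k:ℝ)) = -x + (-k : ℤ) by push_cast; ring, Int.fract_add_intCast]

lemma hzetaStar_int_shift (x : ℝ) (k : ℤ) (s : ℂ) : hzetaStar (x + k) s = hzetaStar x s := by
  unfold hzetaStar
  congr 1; funext n
  congr 1
  push_cast
  rw [show 2 * (Real.pi:ℂ) * Complex.I * ((x:ℂ) + (k:ℂ)) * ((n:ℂ) + 1)
      = 2 * (Real.pi:ℂ) * Complex.I * (x:ℂ) * ((n:ℂ) + 1) + (k * ((n:ℂ)+1)) * (2 * Real.pi * Complex.I) by ring,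
    Complex.exp_add]
  rw [show ((k:ℂ) * ((n:ℂ)+1)) = ((k * (n+1) : ℤ) : ℂ) by push_cast; ring]
  rw [Complex.exp_int_mul_two_pi_mul_I, mul_one]

lemma cpow_div_nat {y : ℝ} (hy : 0 < y) {H : ℕ} (hH : 0 < H) (σ : ℂ) :
    ((y / H : ℝ) : ℂ) ^ (-σ) = (H : ℂ) ^ σ * ((y : ℝ) : ℂ) ^ (-σ) := by
  have hH' : (0:ℝ) < H := by exact_mod_cast hH
  have harg : ((H:ℝ):ℂ).arg ≠ Real.pi := by
    rw [Complex.arg_ofReal_of_nonneg hH'.le]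
    exact (Real.pi_ne_zero).symm
  rw [div_eq_mul_inv, ofReal_mul, ofReal_inv,
    show ((y:ℂ) * ((H:ℝ):ℂ)⁻¹) ^ (-σ) = (((y:ℝ):ℂ) * (((H:ℝ):ℝ):ℂ)⁻¹) ^ (-σ) by norm_num]
  rw [← ofReal_inv, mul_cpow_ofReal_nonneg hy.le (by positivity), ofReal_inv,
    Complex.inv_cpow _ _ harg, ← Complex.cpow_neg, neg_neg]
  push_cast
  ring

lemma sum_range_natCast {N : ℕ} [NeZero N] (f : ZMod N → ℂ) :
    ∑ b ∈ Finset.range N, f ((b : ℕ) : ZMod N) = ∑ x : ZMod N, f x := by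
  apply Finset.sum_nbij' (i := fun b => ((b : ℕ) : ZMod N)) (j := fun x => x.val)
  · intro a _; exact Finset.mem_univ _
  · intro x _; exact Finset.mem_range.2 (ZMod.val_lt x)
  · intro a ha; exact ZMod.val_cast_of_lt (Finset.mem_range.1 ha)
  · intro x _; exact ZMod.natCast_rightInverse x
  · intro a _; rfl

lemma sum_range_shift {N : ℕ} [NeZero N] (f : ZMod N → ℂ) :
    ∑ b ∈ Finset.range N, f ((b + 1 : ℕ) : ZMod N) = ∑ x : ZMod N, f x := by
  have h1 : ∑ b ∈ Finset.range N, f ((b + 1 : ℕ) : ZMod N)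
      = ∑ b ∈ Finset.range N, (fun x => f (x + 1)) ((b : ℕ) : ZMod N) := by
    refine Finset.sum_congr rfl fun b _ => ?_
    push_cast
    rfl
  rw [h1, sum_range_natCast (fun x => f (x + 1))]
  exact Fintype.sum_equiv (Equiv.addRight (1 : ZMod N)) _ _ (fun x => rfl)

lemma exp_geom_sum {M : ℕ} (hM : 0 < M) (m : ℕ) :
    ∑ t ∈ Finset.range M, Complex.exp (2 * Real.pi * Complex.I * m * t / M)
      = if M ∣ m then (M:ℂ) else 0 := by
  have hM' : ((M:ℂ)) ≠ 0 := by exact_mod_cast hM.ne'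
  have hterm : ∀ t : ℕ, Complex.exp (2 * Real.pi * Complex.I * m * t / M)
      = (Complex.exp (2 * Real.pi * Complex.I * m / M)) ^ t := by
    intro t
    rw [← Complex.exp_nat_mul]
    ring_nf
  simp_rw [hterm]
  by_cases hdvd : M ∣ m
  · obtain ⟨k, rfl⟩ := hdvd
    have h1 : Complex.exp (2 * Real.pi * Complex.I * ((M * k : ℕ) : ℂ) / M) = 1 := by
      rw [show 2 * (Real.pi:ℂ) * Complex.I * ((M * k : ℕ) : ℂ) / M = ((k:ℤ) : ℂ) * (2 * Real.pi * Complex.I) by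
        push_cast; field_simp]
      exact Complex.exp_int_mul_two_pi_mul_I k
    push_cast at h1 ⊢
    simp [h1]
  · have hne : Complex.exp (2 * Real.pi * Complex.I * m / M) ≠ 1 := by
      intro h
      rw [Complex.exp_eq_one_iff] at h
      obtain ⟨n, hn⟩ := h
      apply hdvd
      have hpi : (2 * Real.pi * Complex.I) ≠ 0 := by
        simp [Real.pi_ne_zero, Complex.I_ne_zero]
      have h2 : (m : ℂ) = n * M := by
        field_simp at hn
        apply mul_left_cancel₀ hpi
        rw [hn]; ring
      have h3 : (m : ℤ) = n * M := by exact_mod_cast h2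
      have : (M : ℤ) ∣ (m : ℤ) := ⟨n, by rw [h3]; ring⟩
      exact_mod_cast this
    rw [geom_sum_eq hne, if_neg hdvd]
    have : Complex.exp (2 * Real.pi * Complex.I * m / M) ^ M = 1 := by
      rw [← Complex.exp_nat_mul,
        show (M:ℂ) * (2 * Real.pi * Complex.I * m / M) = ((m:ℤ):ℂ) * (2 * Real.pi * Complex.I) by
          push_cast; field_simp]
      exact Complex.exp_int_mul_two_pi_mul_I m
    rw [this]
    simp

lemma sum_hzeta_eq {M H : ℕ} [NeZero M] (hH : 0 < H) (hMH : M ∣ H)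
    (χ : DirichletCharacter ℂ M) {σ : ℂ} (hσ : 1 < σ.re) :
    ∑ a ∈ Finset.range H, χ ((a + 1 : ℕ) : ZMod M) * hzeta (((a : ℝ) + 1) / H) σ
      = (H : ℂ) ^ σ * LSeries (fun n => χ ((n : ℕ) : ZMod M)) σ := by
  haveI : NeZero H := ⟨hH.ne'⟩
  set f : ℕ → ℂ := fun n => χ ((n : ℕ) : ZMod M) with hf
  have hsum : Summable (LSeries.term f σ) :=
    DirichletCharacter.LSeriesSummable_of_one_lt_re χ hσ
  have key : ∀ a ∈ Finset.range H, χ ((a + 1 : ℕ) : ZMod M) * hzeta (((a : ℝ) + 1) / H) σ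
      = (H:ℂ)^σ * ∑' n : ℕ, LSeries.term f σ (n * H + a + 1) := by
    intro a ha
    rw [Finset.mem_range] at ha
    have hHR : (0:ℝ) < H := by exact_mod_cast hH
    have hx0 : 0 < ((a:ℝ)+1)/H := by positivity
    have hx1 : ((a:ℝ)+1)/H ≤ 1 := by
      rw [div_le_one hHR]
      have : (a:ℝ) + 1 ≤ H := by exact_mod_cast Nat.succ_le_of_lt ha
      linarith
    unfold hzeta
    rw [fract_aux hx0 hx1, ← tsum_mul_left, ← tsum_mul_left]
    refine tsum_congr fun n => ?_
    have hne : n * H + a + 1 ≠ 0 := by omega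
    rw [LSeries.term_of_ne_zero hne]
    have hcast : f (n * H + a + 1) = χ ((a + 1 : ℕ) : ZMod M) := by
      have h0 : ((n * H : ℕ) : ZMod M) = 0 :=
        (ZMod.natCast_eq_zero_iff _ _).2 (Dvd.dvd.mul_left hMH n)
      rw [hf]
      show χ ((n * H + a + 1 : ℕ) : ZMod M) = χ ((a + 1 : ℕ) : ZMod M)
      rw [show ((n * H + a + 1 : ℕ) : ZMod M) = ((a + 1 : ℕ) : ZMod M) from by
        rw [show n * H + a + 1 = n * H + (a + 1) from by ring, Nat.cast_add, h0, zero_add]]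
    have hy : (0:ℝ) < ((n * H + a + 1 : ℕ) : ℝ) := by positivity
    have hfrac : ((n:ℝ) + ((a:ℝ)+1)/H : ℝ) = (((n * H + a + 1 : ℕ) : ℝ)/H : ℝ) := by
      field_simp
      push_cast
      ring
    rw [hfrac, cpow_div_nat hy hH, hcast, Complex.cpow_neg]
    push_cast
    ring
  rw [Finset.sum_congr rfl key, ← Finset.mul_sum]
  congr 1
  -- regroup
  have hsum1 : Summable fun m => LSeries.term f σ (m + 1) := by
    rwa [summable_nat_add_iff]
  have hg : Summable fun p : ℕ × Fin H => LSeries.term f σ (p.1 * H + ↑p.2 + 1) := by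
    exact ((Nat.divModEquiv H).symm.summable_iff
      (f := fun m => LSeries.term f σ (m + 1))).2 hsum1
  have h₁ : ∀ a : Fin H, Summable fun n : ℕ => LSeries.term f σ (n * H + ↑a + 1) := by
    intro a
    have hinj : Function.Injective (fun n : ℕ => n * H + ↑a) := by
      intro n m h
      simp only at h
      have : n * H = m * H := by omega
      exact Nat.eq_of_mul_eq_mul_right hH this
    exact hsum1.comp_injective hinj
  calc ∑ a ∈ Finset.range H, ∑' n : ℕ, LSeries.term f σ (n * H + a + 1)
      = ∑ a : Fin H, ∑' n : ℕ, LSeries.term f σ (n * H + ↑a + 1) :=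
        (Fin.sum_univ_eq_sum_range _ H).symm
    _ = ∑' n : ℕ, ∑ a : Fin H, LSeries.term f σ (n * H + ↑a + 1) :=
        (Summable.tsum_finsetSum (fun a _ => h₁ a)).symm
    _ = ∑' n : ℕ, ∑' a : Fin H, LSeries.term f σ (n * H + ↑a + 1) :=
        tsum_congr fun n => (tsum_fintype _).symm
    _ = ∑' p : ℕ × Fin H, LSeries.term f σ (p.1 * H + ↑p.2 + 1) :=
        (Summable.tsum_prod' hg (fun n => Summable.of_finite)).symm
    _ = ∑' m : ℕ, LSeries.term f σ (m + 1) := by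
        exact Equiv.tsum_eq (Nat.divModEquiv H).symm
          (fun m => LSeries.term f σ (m + 1))
    _ = LSeries f σ := by
        rw [LSeries, Summable.tsum_eq_zero_add hsum, LSeries.term_zero, zero_add]

lemma sum_char_exp {N : ℕ} [NeZero N] (χ₂ : DirichletCharacter ℂ N)
    (hχ₂ : χ₂.IsPrimitive) (k : ℕ) :
    ∑ r ∈ Finset.range N, χ₂ ((r + 1 : ℕ) : ZMod N) *
        Complex.exp (2 * Real.pi * Complex.I * (((r : ℕ) + 1) * k) / N)
      = χ₂⁻¹ ((k : ℕ) : ZMod N) * gaussSum χ₂ ZMod.stdAddChar := by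
  have h1 : ∀ r : ℕ, Complex.exp (2 * Real.pi * Complex.I * (((r:ℕ) + 1) * k) / N)
      = ZMod.stdAddChar ((((r+1) * k : ℕ) : ZMod N)) := by
    intro r
    rw [show (((r+1) * k : ℕ) : ZMod N) = ((((r+1) * k : ℕ) : ℤ) : ZMod N) from by push_cast; ring,
      ZMod.stdAddChar_coe]
    push_cast
    ring_nf
  have h2 : ∑ r ∈ Finset.range N, χ₂ ((r + 1 : ℕ) : ZMod N) *
        Complex.exp (2 * Real.pi * Complex.I * (((r : ℕ) + 1) * k) / N)
      = ∑ x : ZMod N, χ₂ x * ZMod.stdAddChar (x * (k : ZMod N)) := by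
    rw [← sum_range_shift (fun x => χ₂ x * ZMod.stdAddChar (x * (k : ZMod N)))]
    refine Finset.sum_congr rfl fun r _ => ?_
    rw [h1 r]
    congr 1
    congr 1
    push_cast
    ring
  rw [h2, ← gaussSum_mulShift_of_isPrimitive ZMod.stdAddChar hχ₂ (k : ZMod N), gaussSum]
  refine Finset.sum_congr rfl fun x _ => ?_
  rw [AddChar.mulShift_apply]
  ring_nf

lemma gauss_inner {M N : ℕ} (hM : 0 < M) (hN : 0 < N) [NeZero N]
    (χ₂ : DirichletCharacter ℂ N) (hχ₂ : χ₂.IsPrimitive) (m : ℕ) :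
    ∑ b ∈ Finset.range (M * N), χ₂ ((b + 1 : ℕ) : ZMod N) *
        Complex.exp (2 * Real.pi * Complex.I * ((((b:ℝ) + 1) / ((M*N : ℕ):ℝ) : ℝ) : ℂ) * (m:ℂ))
      = if M ∣ m then
          (M:ℂ) * (χ₂⁻¹ (((m / M : ℕ)) : ZMod N) * gaussSum χ₂ ZMod.stdAddChar) else 0 := by
  have hMC : (M:ℂ) ≠ 0 := by exact_mod_cast hM.ne'
  have hNC : (N:ℂ) ≠ 0 := by exact_mod_cast hN.ne'
  have step1 : ∑ b ∈ Finset.range (M * N), χ₂ ((b + 1 : ℕ) : ZMod N) *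
        Complex.exp (2 * Real.pi * Complex.I * ((((b:ℝ) + 1) / ((M*N : ℕ):ℝ) : ℝ) : ℂ) * (m:ℂ))
      = ∑ p ∈ Finset.range M ×ˢ Finset.range N, (χ₂ ((p.2 + 1 : ℕ) : ZMod N) *
          Complex.exp (2 * Real.pi * Complex.I * (((p.2:ℕ):ℂ) + 1) * (m:ℂ) / ((M:ℂ) * (N:ℂ))))
            * Complex.exp (2 * Real.pi * Complex.I * (m:ℂ) * ((p.1:ℕ):ℂ) / (M:ℂ)) := by
    refine Finset.sum_nbij' (i := fun b => (b / N, b % N)) (j := fun p => p.1 * N + p.2)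
      ?_ ?_ ?_ ?_ ?_
    · intro b hb
      rw [Finset.mem_range] at hb
      rw [Finset.mem_product, Finset.mem_range, Finset.mem_range]
      refine ⟨Nat.div_lt_of_lt_mul (by rwa [mul_comm] at hb), Nat.mod_lt _ hN⟩
    · intro p hp
      rw [Finset.mem_product, Finset.mem_range, Finset.mem_range] at hp
      rw [Finset.mem_range]
      calc p.1 * N + p.2 < p.1 * N + N := by omega
        _ = (p.1 + 1) * N := by ring
        _ ≤ M * N := Nat.mul_le_mul_right N hp.1
    · intro b _
      exact Nat.div_add_mod' b N
    · intro p hp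
      rw [Finset.mem_product, Finset.mem_range, Finset.mem_range] at hp
      have h1 : (p.1 * N + p.2) / N = p.1 := by
        rw [mul_comm, Nat.mul_add_div hN, Nat.div_eq_of_lt hp.2, add_zero]
      have h2 : (p.1 * N + p.2) % N = p.2 := by
        rw [add_comm, Nat.add_mul_mod_self_right, Nat.mod_eq_of_lt hp.2]
      rw [h1, h2]
    · intro b hb
      simp only
      have hdm : b = b / N * N + b % N := (Nat.div_add_mod' b N).symm
      have hχ : χ₂ ((b + 1 : ℕ) : ZMod N) = χ₂ ((b % N + 1 : ℕ) : ZMod N) := by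
        congr 1
        conv_lhs => rw [hdm]
        push_cast
        rw [show ((N:ZMod N)) = 0 from by exact_mod_cast ZMod.natCast_self N]
        ring
      rw [hχ]
      conv_rhs => rw [mul_assoc, ← Complex.exp_add]
      congr 2
      have hb' : (b:ℂ) = (((b / N : ℕ)):ℂ) * N + ((b % N : ℕ):ℂ) := by
        exact_mod_cast congrArg (Nat.cast : ℕ → ℂ) hdm
      push_cast
      rw [hb']
      field_simp
      ring
  rw [step1, Finset.sum_product]
  simp_rw [← Finset.sum_mul]
  rw [← Finset.mul_sum, exp_geom_sum hM m]
  by_cases hdvd : M ∣ m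
  · rw [if_pos hdvd, if_pos hdvd]
    obtain ⟨k, rfl⟩ := hdvd
    rw [Nat.mul_div_cancel_left k hM]
    have : ∑ r ∈ Finset.range N, χ₂ ((r + 1 : ℕ) : ZMod N) *
        Complex.exp (2 * Real.pi * Complex.I * (((r:ℕ):ℂ) + 1) * ((M * k : ℕ):ℂ) / ((M:ℂ) * (N:ℂ)))
        = ∑ r ∈ Finset.range N, χ₂ ((r + 1 : ℕ) : ZMod N) *
        Complex.exp (2 * Real.pi * Complex.I * (((r : ℕ) + 1) * k) / N) := by
      refine Finset.sum_congr rfl fun r _ => ?_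
      congr 1
      congr 1
      push_cast
      field_simp
    rw [this, sum_char_exp χ₂ hχ₂ k]
    ring
  · rw [if_neg hdvd, if_neg hdvd, mul_zero]

lemma natCast_mul_cpow (a b : ℕ) (s : ℂ) : ((a * b : ℕ) : ℂ) ^ s = (a:ℂ)^s * (b:ℂ)^s := by
  have := mul_cpow_ofReal_nonneg (Nat.cast_nonneg a) (Nat.cast_nonneg b) s
  push_cast at this ⊢
  exact this

lemma summable_exp_div (x : ℝ) {s : ℂ} (hs : 1 < s.re) :
    Summable (fun n : ℕ =>
      Complex.exp (2 * Real.pi * Complex.I * (x:ℂ) * ((n:ℂ)+1)) / ((n:ℂ)+1) ^ s) := by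
  apply Summable.of_norm
  have hnorm : ∀ n : ℕ, ‖Complex.exp (2 * Real.pi * Complex.I * (x:ℂ) * ((n:ℂ)+1)) / ((n:ℂ)+1) ^ s‖
      = ((n:ℝ)+1) ^ (-s.re) := by
    intro n
    rw [norm_div]
    have h1 : ‖Complex.exp (2 * Real.pi * Complex.I * (x:ℂ) * ((n:ℂ)+1))‖ = 1 := by
      rw [Complex.norm_exp]
      have : (2 * (Real.pi:ℂ) * Complex.I * (x:ℂ) * ((n:ℂ)+1)).re = 0 := by
        have : (2 * (Real.pi:ℂ) * Complex.I * (x:ℂ) * ((n:ℂ)+1))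
            = ((2 * Real.pi * x * ((n:ℝ)+1) : ℝ) : ℂ) * Complex.I := by push_cast; ring
        rw [this]
        simp
      rw [this, Real.exp_zero]
    rw [h1]
    have h2 : ‖((n:ℂ)+1) ^ s‖ = ((n:ℝ)+1) ^ s.re := by
      rw [show ((n:ℂ)+1) = (((n:ℝ)+1 : ℝ) : ℂ) from by push_cast; ring,
        Complex.norm_cpow_eq_rpow_re_of_pos (by positivity)]
    rw [h2, Real.rpow_neg (by positivity), one_div]
  rw [show (fun n : ℕ => ‖Complex.exp (2 * Real.pi * Complex.I * (x:ℂ) * ((n:ℂ)+1)) / ((n:ℂ)+1) ^ s‖)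
      = fun n : ℕ => ((n:ℝ)+1) ^ (-s.re) from funext hnorm]
  have h3 : Summable (fun n : ℕ => ((n:ℝ))^(-s.re)) := Real.summable_nat_rpow.2 (by linarith)
  have h4 := (summable_nat_add_iff 1).2 h3
  refine h4.congr fun n => ?_
  push_cast
  rfl

lemma sum_hzetaStar_eq {M N : ℕ} (hM : 0 < M) (hN : 0 < N) [NeZero N]
    (χ₂ : DirichletCharacter ℂ N) (hχ₂ : χ₂.IsPrimitive) {s : ℂ} (hs : 1 < s.re) :
    ∑ b ∈ Finset.range (M * N), χ₂ ((b + 1 : ℕ) : ZMod N) * hzetaStar (((b : ℝ) + 1) / (M * N : ℕ)) s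
      = (M:ℂ) * (M:ℂ) ^ (-s) * gaussSum χ₂ ZMod.stdAddChar
          * LSeries (fun n => χ₂⁻¹ ((n : ℕ) : ZMod N)) s := by
  have hMC : (M:ℂ) ≠ 0 := by exact_mod_cast hM.ne'
  set G := gaussSum χ₂ ZMod.stdAddChar with hG
  have hsummand : ∀ b : ℕ, Summable (fun n : ℕ => χ₂ ((b + 1 : ℕ) : ZMod N) *
      (Complex.exp (2 * Real.pi * Complex.I *
        (((((b:ℝ) + 1) / (M*N : ℕ)) : ℝ) : ℂ) * ((n:ℂ)+1)) / ((n:ℂ)+1) ^ s)) :=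
    fun b => (summable_exp_div _ hs).mul_left _
  have step1 : ∑ b ∈ Finset.range (M * N), χ₂ ((b + 1 : ℕ) : ZMod N) *
        hzetaStar (((b : ℝ) + 1) / (M * N : ℕ)) s
      = ∑' n : ℕ, (∑ b ∈ Finset.range (M * N), χ₂ ((b + 1 : ℕ) : ZMod N) *
          Complex.exp (2 * Real.pi * Complex.I *
            ((((b:ℝ) + 1) / ((M*N : ℕ):ℝ) : ℝ) : ℂ) * (((n+1 : ℕ)):ℂ))) / ((n:ℂ)+1) ^ s := by
    unfold hzetaStar
    calc ∑ b ∈ Finset.range (M * N), χ₂ ((b + 1 : ℕ) : ZMod N) *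
          ∑' n : ℕ, Complex.exp (2 * Real.pi * Complex.I *
            (((((b:ℝ) + 1) / (M*N : ℕ)) : ℝ) : ℂ) * ((n:ℂ)+1)) / ((n:ℂ)+1) ^ s
        = ∑ b ∈ Finset.range (M * N), ∑' n : ℕ, χ₂ ((b + 1 : ℕ) : ZMod N) *
            (Complex.exp (2 * Real.pi * Complex.I *
              (((((b:ℝ) + 1) / (M*N : ℕ)) : ℝ) : ℂ) * ((n:ℂ)+1)) / ((n:ℂ)+1) ^ s) :=
          Finset.sum_congr rfl fun b _ => (tsum_mul_left).symm
      _ = ∑' n : ℕ, ∑ b ∈ Finset.range (M * N), χ₂ ((b + 1 : ℕ) : ZMod N) *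
            (Complex.exp (2 * Real.pi * Complex.I *
              (((((b:ℝ) + 1) / (M*N : ℕ)) : ℝ) : ℂ) * ((n:ℂ)+1)) / ((n:ℂ)+1) ^ s) :=
          (Summable.tsum_finsetSum (fun b _ => hsummand b)).symm
      _ = ∑' n : ℕ, (∑ b ∈ Finset.range (M * N), χ₂ ((b + 1 : ℕ) : ZMod N) *
            Complex.exp (2 * Real.pi * Complex.I *
              ((((b:ℝ) + 1) / ((M*N : ℕ):ℝ) : ℝ) : ℂ) * (((n+1 : ℕ)):ℂ))) / ((n:ℂ)+1) ^ s := by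
          refine tsum_congr fun n => ?_
          rw [Finset.sum_div]
          refine Finset.sum_congr rfl fun b _ => ?_
          rw [mul_div_assoc]
          congr 3
          push_cast
          ring
  rw [step1]
  have step2 : ∀ n : ℕ, (∑ b ∈ Finset.range (M * N), χ₂ ((b + 1 : ℕ) : ZMod N) *
          Complex.exp (2 * Real.pi * Complex.I *
            ((((b:ℝ) + 1) / ((M*N : ℕ):ℝ) : ℝ) : ℂ) * (((n+1 : ℕ)):ℂ))) / ((n:ℂ)+1) ^ s
      = (if M ∣ (n+1) then (M:ℂ) * (χ₂⁻¹ ((((n+1) / M : ℕ)) : ZMod N) * G) else 0)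
          / ((n:ℂ)+1)^s := by
    intro n
    rw [gauss_inner hM hN χ₂ hχ₂ (n+1)]
  rw [tsum_congr step2]
  set g : ℕ → ℂ := fun n => (if M ∣ (n+1) then (M:ℂ) *
    (χ₂⁻¹ ((((n+1) / M : ℕ)) : ZMod N) * G) else 0) / ((n:ℂ)+1)^s with hgdef
  have hinj : Function.Injective (fun k : ℕ => M * k + (M - 1)) := by
    intro a b h
    simp only at h
    exact Nat.eq_of_mul_eq_mul_left hM (Nat.add_right_cancel h)
  have hik : ∀ k : ℕ, (M * k + (M-1)) + 1 = M * (k+1) := by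
    intro k
    rw [Nat.mul_succ, add_assoc, Nat.sub_add_cancel hM]
  have hsupp : Function.support g ⊆ Set.range (fun k : ℕ => M * k + (M - 1)) := by
    intro n hn
    have hdvd : M ∣ (n+1) := by
      by_contra h
      apply hn
      rw [hgdef]
      simp [h]
    obtain ⟨j, hj⟩ := hdvd
    have hj0 : j ≠ 0 := by rintro rfl; omega
    obtain ⟨j', rfl⟩ := Nat.exists_eq_succ_of_ne_zero hj0
    refine ⟨j', ?_⟩
    simp only
    rw [Nat.mul_succ] at hj
    omega
  rw [← Function.Injective.tsum_eq hinj hsupp]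
  have hsum2 : Summable (LSeries.term (fun n => χ₂⁻¹ ((n : ℕ) : ZMod N)) s) :=
    DirichletCharacter.LSeriesSummable_of_one_lt_re χ₂⁻¹ hs
  have hterm : ∀ k : ℕ, g (M * k + (M-1))
      = ((M:ℂ) * (M:ℂ)^(-s) * G) * LSeries.term (fun n => χ₂⁻¹ ((n : ℕ) : ZMod N)) s (k+1) := by
    intro k
    rw [hgdef]
    simp only
    rw [hik k, if_pos (dvd_mul_right M (k+1)), Nat.mul_div_cancel_left _ hM,
      LSeries.term_of_ne_zero (Nat.succ_ne_zero k)]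
    have hcast : ((M * k + (M-1) : ℕ) : ℂ) + 1 = ((M * (k+1) : ℕ) : ℂ) := by
      exact_mod_cast congrArg (Nat.cast : ℕ → ℂ) (hik k)
    rw [hcast, natCast_mul_cpow, Complex.cpow_neg]
    have hMs : (M:ℂ)^s ≠ 0 := by
      simp [Complex.cpow_eq_zero_iff, hMC]
    have hks : (((k+1 : ℕ)):ℂ)^s ≠ 0 := by
      rw [Ne, Complex.cpow_eq_zero_iff]
      rintro ⟨h, -⟩
      exact Nat.succ_ne_zero k (by exact_mod_cast h)
    field_simp
  rw [tsum_congr hterm, tsum_mul_left]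
  rw [show LSeries (fun n => χ₂⁻¹ ((n : ℕ) : ZMod N)) s
      = ∑' k : ℕ, LSeries.term (fun n => χ₂⁻¹ ((n : ℕ) : ZMod N)) s (k+1) from by
    rw [LSeries, Summable.tsum_eq_zero_add hsum2, LSeries.term_zero, zero_add]]

lemma gauss_stmt_eq {N : ℕ} [NeZero N] (χ₂ : DirichletCharacter ℂ N) :
    ∑ b ∈ Finset.range N, χ₂ ((b : ℕ) : ZMod N) *
        Complex.exp (2 * Real.pi * Complex.I * (b : ℂ) / (N : ℂ))
      = gaussSum χ₂ ZMod.stdAddChar := by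
  rw [gaussSum, ← sum_range_natCast (fun x => χ₂ x * ZMod.stdAddChar x)]
  refine Finset.sum_congr rfl fun b _ => ?_
  congr 1
  rw [show ((b:ℕ) : ZMod N) = (((b:ℕ):ℤ) : ZMod N) from by push_cast; rfl, ZMod.stdAddChar_coe]
  push_cast
  ring

lemma gauss_ne_zero {N : ℕ} [NeZero N] (χ₂ : DirichletCharacter ℂ N)
    (hχ₂ : χ₂.IsPrimitive) : gaussSum χ₂ ZMod.stdAddChar ≠ 0 := by
  intro hG
  have h0 : ZMod.dft (⇑χ₂) = ZMod.dft (0 : ZMod N → ℂ) := by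
    funext k
    rw [map_zero]
    rw [DirichletCharacter.IsPrimitive.fourierTransform_eq_inv_mul_gaussSum hχ₂ k, hG, mul_zero]
    rfl
  have h1 : (⇑χ₂) = (0 : ZMod N → ℂ) := ZMod.dft.injective h0
  have h2 := congrFun h1 1
  rw [map_one] at h2
  exact one_ne_zero h2

lemma neg_idx {H : ℕ} (hH : 0 < H) {a : ℕ} (ha : a < H) :
    ∃ c : ℕ, (a + 1) + ((2*H - 2 - a) % H + 1) = c * H := by
  rcases Nat.lt_or_ge a (H-1) with h | h
  · have hb : (2*H - 2 - a) = H + (H - 2 - a) := by omega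
    rw [hb, Nat.add_mod_left, Nat.mod_eq_of_lt (by omega)]
    exact ⟨1, by omega⟩
  · have ha' : a = H - 1 := by omega
    subst ha'
    have hb : 2*H - 2 - (H-1) = H - 1 := by omega
    rw [hb, Nat.mod_eq_of_lt (by omega)]
    exact ⟨2, by omega⟩

lemma neg_idx_invol {H : ℕ} (hH : 0 < H) {a : ℕ} (ha : a < H) :
    (2*H - 2 - ((2*H - 2 - a) % H)) % H = a := by
  rcases Nat.lt_or_ge a (H-1) with h | h
  · have hb : (2*H - 2 - a) = H + (H - 2 - a) := by omega
    rw [hb, Nat.add_mod_left, Nat.mod_eq_of_lt (show H - 2 - a < H by omega)]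
    have h2 : 2*H - 2 - (H - 2 - a) = H + a := by omega
    rw [h2, Nat.add_mod_left, Nat.mod_eq_of_lt ha]
  · have ha' : a = H - 1 := by omega
    subst ha'
    have hb : 2*H - 2 - (H-1) = H - 1 := by omega
    rw [hb, Nat.mod_eq_of_lt (show H - 1 < H by omega), hb,
      Nat.mod_eq_of_lt (show H - 1 < H by omega)]

lemma sum_neg_reindex {M H : ℕ} [NeZero M] (hH : 0 < H) (hMH : M ∣ H)
    (χ : DirichletCharacter ℂ M) (F : ℝ → ℂ) (hF : ∀ (x : ℝ) (k : ℕ), F (x + k) = F x) :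
    ∑ a ∈ Finset.range H, χ ((a + 1 : ℕ) : ZMod M) * F (-(((a : ℝ) + 1) / H))
      = χ (-1) * ∑ a ∈ Finset.range H, χ ((a + 1 : ℕ) : ZMod M) * F (((a : ℝ) + 1) / H) := by
  have hHR : (0:ℝ) < H := by exact_mod_cast hH
  rw [Finset.mul_sum]
  refine Finset.sum_nbij' (i := fun a => (2*H - 2 - a) % H) (j := fun a => (2*H - 2 - a) % H)
    ?_ ?_ ?_ ?_ ?_
  · intro a _; exact Finset.mem_range.2 (Nat.mod_lt _ hH)
  · intro a _; exact Finset.mem_range.2 (Nat.mod_lt _ hH)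
  · intro a ha; exact neg_idx_invol hH (Finset.mem_range.1 ha)
  · intro a ha; exact neg_idx_invol hH (Finset.mem_range.1 ha)
  · intro a ha
    rw [Finset.mem_range] at ha
    obtain ⟨c, hc⟩ := neg_idx hH ha
    set b := (2*H - 2 - a) % H with hbdef
    have hreal : ((b:ℝ)+1)/H = -(((a : ℝ) + 1) / H) + (c:ℕ) := by
      have : ((a:ℝ) + 1) + ((b:ℝ) + 1) = (c:ℝ) * H := by exact_mod_cast hc
      field_simp
      linarith
    have hzm : ((b + 1 : ℕ) : ZMod M) = -((a + 1 : ℕ) : ZMod M) := by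
      have hH0 : ((H:ℕ) : ZMod M) = 0 := (ZMod.natCast_eq_zero_iff _ _).2 hMH
      have : ((a + 1 : ℕ) : ZMod M) + ((b + 1 : ℕ) : ZMod M) = ((c * H : ℕ) : ZMod M) := by
        rw [← Nat.cast_add, hc]
      rw [Nat.cast_mul, hH0, mul_zero] at this
      linear_combination this
    have hχeq : χ ((a + 1 : ℕ) : ZMod M) = χ (-1) * χ ((b + 1 : ℕ) : ZMod M) := by
      rw [← map_mul, hzm]
      ring_nf
    rw [hreal, hF, hχeq]
    ring


theorem rankin_selberg_eisenstein_dirichlet_series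
    (M N : ℕ) (hM : 0 < M) (hN : 0 < N) (hMN : Nat.Coprime M N)
    (χ₁ : DirichletCharacter ℂ M) (χ₂ : DirichletCharacter ℂ N)
    (hχ₂ : χ₂.IsPrimitive) (w : ℕ) (hw : 1 ≤ w)
    (hpar : χ₁ (-1) * χ₂ (-1) = (-1) ^ w)
    (s : ℂ) (hs : (w : ℝ) + 1 < s.re) :
    (1 / (2 * ∑ b ∈ Finset.range N,
          χ₂ ((b : ℕ) : ZMod N) * Complex.exp (2 * Real.pi * Complex.I * (b : ℂ) / (N : ℂ)))) *
        (∑ a ∈ Finset.range (M * N), ∑ b ∈ Finset.range (M * N),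
          χ₁ ((a + 1 : ℕ) : ZMod M) * χ₂ ((b + 1 : ℕ) : ZMod N) *
            (hzeta (((a : ℝ) + 1) / (M * N : ℕ)) (s - w + 1) *
                hzetaStar (((b : ℝ) + 1) / (M * N : ℕ)) s +
              (-1) ^ w * hzeta (-(((a : ℝ) + 1) / (M * N : ℕ))) (s - w + 1) *
                hzetaStar (-(((b : ℝ) + 1) / (M * N : ℕ))) s)) =
      (N : ℂ) ^ (s - 1) * ((M * N : ℕ) : ℂ) ^ ((2 : ℂ) - (w : ℂ)) *
        LSeries (fun n => χ₁ ((n : ℕ) : ZMod M)) (s - w + 1) *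
        LSeries (fun n => χ₂⁻¹ ((n : ℕ) : ZMod N)) s := by
  haveI : NeZero M := ⟨hM.ne'⟩
  haveI : NeZero N := ⟨hN.ne'⟩
  have hH : 0 < M * N := Nat.mul_pos hM hN
  have hw1 : (1:ℝ) ≤ (w:ℝ) := by exact_mod_cast hw
  have hσ : 1 < (s - (w:ℂ) + 1).re := by
    simp only [Complex.add_re, Complex.sub_re, Complex.natCast_re, Complex.one_re]
    linarith
  have hs1 : 1 < s.re := by linarith
  set σ := s - (w:ℂ) + 1 with hσdef
  set G := gaussSum χ₂ ZMod.stdAddChar with hGdef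
  set L₁ := LSeries (fun n => χ₁ ((n : ℕ) : ZMod M)) σ with hL1
  set L₂ := LSeries (fun n => χ₂⁻¹ ((n : ℕ) : ZMod N)) s with hL2
  set A := ∑ a ∈ Finset.range (M * N), χ₁ ((a + 1 : ℕ) : ZMod M) *
    hzeta (((a : ℝ) + 1) / (M * N : ℕ)) σ with hAdef
  set B := ∑ b ∈ Finset.range (M * N), χ₂ ((b + 1 : ℕ) : ZMod N) *
    hzetaStar (((b : ℝ) + 1) / (M * N : ℕ)) s with hBdef
  -- Gauss sum in the statement
  rw [gauss_stmt_eq χ₂]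
  -- split the double sum
  have hF1 : ∀ (x : ℝ) (k : ℕ), (fun x => hzeta x σ) (x + (k:ℝ)) = (fun x => hzeta x σ) x := by
    intro x k
    simp only
    rw [show ((k:ℕ):ℝ) = ((k:ℤ):ℝ) from by push_cast; rfl]
    exact hzeta_int_shift x k σ
  have hF2 : ∀ (x : ℝ) (k : ℕ), (fun x => hzetaStar x s) (x + (k:ℝ))
      = (fun x => hzetaStar x s) x := by
    intro x k
    simp only
    rw [show ((k:ℕ):ℝ) = ((k:ℤ):ℝ) from by push_cast; rfl]
    exact hzetaStar_int_shift x k s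
  have hA' : ∑ a ∈ Finset.range (M * N), χ₁ ((a + 1 : ℕ) : ZMod M) *
      hzeta (-(((a : ℝ) + 1) / (M * N : ℕ))) σ = χ₁ (-1) * A := by
    rw [hAdef]
    exact sum_neg_reindex hH (dvd_mul_right M N) χ₁ (fun x => hzeta x σ) hF1
  have hB' : ∑ b ∈ Finset.range (M * N), χ₂ ((b + 1 : ℕ) : ZMod N) *
      hzetaStar (-(((b : ℝ) + 1) / (M * N : ℕ))) s = χ₂ (-1) * B := by
    rw [hBdef]
    exact sum_neg_reindex hH (dvd_mul_left N M) χ₂ (fun x => hzetaStar x s) hF2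
  have hsplit : ∑ a ∈ Finset.range (M * N), ∑ b ∈ Finset.range (M * N),
      χ₁ ((a + 1 : ℕ) : ZMod M) * χ₂ ((b + 1 : ℕ) : ZMod N) *
        (hzeta (((a : ℝ) + 1) / (M * N : ℕ)) σ *
            hzetaStar (((b : ℝ) + 1) / (M * N : ℕ)) s +
          (-1) ^ w * hzeta (-(((a : ℝ) + 1) / (M * N : ℕ))) σ *
            hzetaStar (-(((b : ℝ) + 1) / (M * N : ℕ))) s)
      = A * B + (-1)^w * ((χ₁ (-1) * A) * (χ₂ (-1) * B)) := by
    rw [← hA', ← hB', hAdef, hBdef, Finset.sum_mul_sum, Finset.sum_mul_sum, Finset.mul_sum]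
    simp_rw [Finset.mul_sum]
    rw [← Finset.sum_add_distrib]
    refine Finset.sum_congr rfl fun a _ => ?_
    rw [← Finset.sum_add_distrib]
    refine Finset.sum_congr rfl fun b _ => by ring
  rw [hsplit]
  have hfactor : ((-1:ℂ))^w * (χ₁ (-1) * χ₂ (-1)) = 1 := by
    rw [hpar, ← pow_add, show w + w = 2*w from by ring, pow_mul]
    norm_num
  have hA : A = ((M * N : ℕ):ℂ) ^ σ * L₁ := by
    rw [hAdef, hL1]
    exact sum_hzeta_eq hH (dvd_mul_right M N) χ₁ hσ
  have hB : B = (M:ℂ) * (M:ℂ) ^ (-s) * G * L₂ := by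
    rw [hBdef, hL2, hGdef]
    exact sum_hzetaStar_eq hM hN χ₂ hχ₂ hs1
  have hG0 : G ≠ 0 := gauss_ne_zero χ₂ hχ₂
  have hMC : (M:ℂ) ≠ 0 := by exact_mod_cast hM.ne'
  have hNC : (N:ℂ) ≠ 0 := by exact_mod_cast hN.ne'
  have hHC : ((M * N : ℕ):ℂ) ≠ 0 := by exact_mod_cast hH.ne'
  -- key power identity
  have key : ((M * N : ℕ):ℂ) ^ σ * ((M:ℂ) * (M:ℂ) ^ (-s))
      = (N : ℂ) ^ (s - 1) * ((M * N : ℕ) : ℂ) ^ ((2 : ℂ) - (w : ℂ)) := by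
    have e1 : ((M * N : ℕ):ℂ) ^ σ
        = ((M * N : ℕ):ℂ) ^ (s - 1) * ((M * N : ℕ):ℂ) ^ ((2:ℂ) - (w:ℂ)) := by
      rw [← Complex.cpow_add _ _ hHC, hσdef]
      congr 1
      ring
    have e2 : ((M * N : ℕ):ℂ) ^ (s - 1) = (M:ℂ) ^ (s - 1) * (N:ℂ) ^ (s - 1) :=
      natCast_mul_cpow M N (s - 1)
    have e3 : (M:ℂ) ^ (s - 1) * ((M:ℂ) * (M:ℂ) ^ (-s)) = 1 := by
      rw [show (M:ℂ) * (M:ℂ) ^ (-s) = (M:ℂ) ^ ((1:ℂ) + -s) from by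
        rw [Complex.cpow_add _ _ hMC, Complex.cpow_one]]
      rw [← Complex.cpow_add _ _ hMC, show s - 1 + ((1:ℂ) + -s) = 0 from by ring,
        Complex.cpow_zero]
    calc ((M * N : ℕ):ℂ) ^ σ * ((M:ℂ) * (M:ℂ) ^ (-s))
        = ((M:ℂ) ^ (s - 1) * ((M:ℂ) * (M:ℂ) ^ (-s))) * ((N:ℂ) ^ (s - 1) *
            ((M * N : ℕ):ℂ) ^ ((2:ℂ) - (w:ℂ))) := by rw [e1, e2]; ring
      _ = (N : ℂ) ^ (s - 1) * ((M * N : ℕ) : ℂ) ^ ((2 : ℂ) - (w : ℂ)) := by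
          rw [e3, one_mul]
  -- final computation
  rw [← hGdef]
  calc (1 / (2*G)) * (A * B + (-1)^w * (χ₁ (-1) * A * (χ₂ (-1) * B)))
      = (1 / (2*G)) * ((A * B) * (1 + (-1)^w * (χ₁ (-1) * χ₂ (-1)))) := by ring
    _ = (1 / (2*G)) * ((A * B) * 2) := by rw [hfactor]; norm_num
    _ = G⁻¹ * (A * B) := by field_simp
    _ = G⁻¹ * ((((M*N:ℕ):ℂ)^σ * L₁) * ((M:ℂ) * (M:ℂ)^(-s) * G * L₂)) := by rw [hA, hB]
    _ = (((M*N:ℕ):ℂ)^σ * ((M:ℂ) * (M:ℂ)^(-s))) * L₁ * L₂ := by field_simp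
    _ = ((N:ℂ)^(s-1) * ((M*N:ℕ):ℂ)^((2:ℂ)-(w:ℂ))) * L₁ * L₂ := by rw [key]
    _ = (N : ℂ) ^ (s - 1) * ((M * N : ℕ) : ℂ) ^ ((2 : ℂ) - (w : ℂ)) * L₁ * L₂ := by ring
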